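/- The (2n−1)-th Taylor bound is the ρ-norm-squared of a specific polynomial approximation to the SLD lying in the Krylov subspace 𝒦_n; consequently the n-th Krylov bound dominates it: B_{2n−1}^{Tay} ≤ B_n^{Kry} ≤ F_Q, equivalently (F_Q − B_n^{Kry})/F_Q ≤ (F_Q − B_{2n−1}^{Tay})/F_Q for all n ≥ 1. -/

import Mathlib

open Matrix BigOperators Finset
open scoped Classical

namespace KST

variable {d : ℕ}

/-- Weighted inner product ⟨X,Y⟩_ρ = Re tr(ρ(XY+YX))/2. -/
noncomputable def wip (ρ X Y : Matrix (Fin d) (Fin d) ℂ) : ℝ :=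
  (((ρ * (X * Y + Y * X)).trace) / 2).re

/-- Membership in 𝒳: Hermitian with ⟨k|X|l⟩ = 0 whenever p_k = p_l = 0. -/
def memX (p : Fin d → ℝ) (v : Fin d → (Fin d → ℂ)) (X : Matrix (Fin d) (Fin d) ℂ) : Prop :=
  X.IsHermitian ∧ ∀ k l, p k = 0 → p l = 0 → star (v k) ⬝ᵥ X.mulVec (v l) = 0

/-- The superoperator R_ρ(X) = (ρX + Xρ)/2. -/
noncomputable def Rop (ρ : Matrix (Fin d) (Fin d) ℂ) (X : Matrix (Fin d) (Fin d) ℂ) :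
    Matrix (Fin d) (Fin d) ℂ :=
  (1/2 : ℂ) • (ρ * X + X * ρ)

/-- The operator i[ρ,H]. -/
noncomputable def comm (ρ H : Matrix (Fin d) (Fin d) ℂ) : Matrix (Fin d) (Fin d) ℂ :=
  Complex.I • (ρ * H - H * ρ)

/-- Krylov subspace 𝒦_n = span_ℝ {R_ρ^k(i[ρ,H]) : 0 ≤ k ≤ n-1}. -/
noncomputable def K (ρ H : Matrix (Fin d) (Fin d) ℂ) (n : ℕ) :
    Submodule ℝ (Matrix (Fin d) (Fin d) ℂ) :=
  Submodule.span ℝ ((fun k => (Rop ρ)^[k] (comm ρ H)) '' (Set.Iio n))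

/-- Quantum Fisher information (spectral formula). -/
noncomputable def FQ (p : Fin d → ℝ) (v : Fin d → (Fin d → ℂ))
    (H : Matrix (Fin d) (Fin d) ℂ) : ℝ :=
  2 * ∑ k, ∑ l, if 0 < p k + p l then
    (p k - p l)^2 / (p k + p l) * Complex.normSq (star (v k) ⬝ᵥ H.mulVec (v l)) else 0

/-- T_k = tr(i[ρ,H] R_ρ^k(i[ρ,H])). -/
noncomputable def Tk (ρ H : Matrix (Fin d) (Fin d) ℂ) (k : ℕ) : ℝ :=
  ((comm ρ H * (Rop ρ)^[k] (comm ρ H)).trace).re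

/-- P is the orthogonal projection of L onto 𝒦_n w.r.t. ⟨·,·⟩_ρ. -/
def IsProj (ρ H : Matrix (Fin d) (Fin d) ℂ) (n : ℕ)
    (L P : Matrix (Fin d) (Fin d) ℂ) : Prop :=
  P ∈ K ρ H n ∧ ∀ Y ∈ K ρ H n, wip ρ (L - P) Y = 0

/-- Spectral form of the Taylor bound. -/
noncomputable def BTaySum (p : Fin d → ℝ) (v : Fin d → (Fin d → ℂ))
    (H : Matrix (Fin d) (Fin d) ℂ) (n : ℕ) : ℝ :=
  2 * ∑ k, ∑ l, (p k - p l) ^ 2 *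
    (∑ m ∈ Finset.range (n + 1), (1 - p k - p l) ^ m) *
    Complex.normSq (star (v k) ⬝ᵥ H.mulVec (v l))


/-! ### Auxiliary machinery -/

section Aux
variable {v : Fin d → (Fin d → ℂ)} {ρ : Matrix (Fin d) (Fin d) ℂ} {p : Fin d → ℝ}

/-- Matrix element in the eigenbasis. -/
noncomputable def a (v : Fin d → (Fin d → ℂ)) (X : Matrix (Fin d) (Fin d) ℂ) (k l : Fin d) : ℂ :=
  star (v k) ⬝ᵥ X.mulVec (v l)

lemma res (horth : ∀ k l, star (v k) ⬝ᵥ v l = (if k = l then 1 else 0)) :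
    ∀ t s : Fin d, ∑ m, (starRingEnd ℂ) (v m t) * v m s = if t = s then 1 else 0 := by
  have hVV : (Matrix.of v) * (Matrix.of v)ᴴ = 1 := by
    ext k l
    have := horth l k
    simpa [Matrix.mul_apply, Matrix.one_apply, dotProduct, conjTranspose_apply, mul_comm,
      eq_comm] using this
  have hVV2 : (Matrix.of v)ᴴ * (Matrix.of v) = 1 := mul_eq_one_comm.mp hVV
  intro t s
  have := congrFun (congrFun hVV2 t) s
  simpa [Matrix.mul_apply, Matrix.one_apply, conjTranspose_apply] using this

lemma res2 (horth : ∀ k l, star (v k) ⬝ᵥ v l = (if k = l then 1 else 0)) :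
    ∀ t s : Fin d, ∑ m, v m t * (starRingEnd ℂ) (v m s) = if t = s then 1 else 0 := by
  intro t s
  have := congrArg (starRingEnd ℂ) (res horth t s)
  simpa [map_sum, apply_ite] using this

lemma expand_vec (horth : ∀ k l, star (v k) ⬝ᵥ v l = (if k = l then 1 else 0))
    (w : Fin d → ℂ) : w = ∑ m, (star (v m) ⬝ᵥ w) • v m := by
  funext i
  simp only [Finset.sum_apply, Pi.smul_apply, smul_eq_mul, dotProduct, Pi.star_apply,
    RCLike.star_def]
  have step : ∀ m, (∑ s, (starRingEnd ℂ) (v m s) * w s) * v m i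
      = ∑ s, w s * (v m i * (starRingEnd ℂ) (v m s)) := by
    intro m; rw [Finset.sum_mul]; exact Finset.sum_congr rfl fun s _ => by ring
  rw [Finset.sum_congr rfl fun m _ => step m, Finset.sum_comm]
  have : ∀ s, ∑ m, w s * (v m i * (starRingEnd ℂ) (v m s)) = w s * (if i = s then 1 else 0) := by
    intro s; rw [← Finset.mul_sum, res2 horth]
  simp [this]

lemma a_add (X Y : Matrix (Fin d) (Fin d) ℂ) (k l : Fin d) :
    a v (X + Y) k l = a v X k l + a v Y k l := by
  simp [a, Matrix.add_mulVec, dotProduct_add]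

lemma a_sub (X Y : Matrix (Fin d) (Fin d) ℂ) (k l : Fin d) :
    a v (X - Y) k l = a v X k l - a v Y k l := by
  simp [a, Matrix.sub_mulVec, dotProduct_sub]

lemma a_smul_real (r : ℝ) (X : Matrix (Fin d) (Fin d) ℂ) (k l : Fin d) :
    a v (r • X) k l = (r : ℂ) * a v X k l := by
  simp [a, Matrix.smul_mulVec, dotProduct_smul, Complex.real_smul]

lemma a_smul (c : ℂ) (X : Matrix (Fin d) (Fin d) ℂ) (k l : Fin d) :
    a v (c • X) k l = c * a v X k l := by
  simp [a, Matrix.smul_mulVec, dotProduct_smul]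

lemma a_sum {ι : Type*} (s : Finset ι) (f : ι → Matrix (Fin d) (Fin d) ℂ) (k l : Fin d) :
    a v (∑ i ∈ s, f i) k l = ∑ i ∈ s, a v (f i) k l := by
  classical
  induction s using Finset.induction_on with
  | empty => simp [a]
  | @insert i s hi ih => rw [Finset.sum_insert hi, Finset.sum_insert hi, a_add, ih]

lemma a_mul (horth : ∀ k l, star (v k) ⬝ᵥ v l = (if k = l then 1 else 0))
    (X Y : Matrix (Fin d) (Fin d) ℂ) (k l : Fin d) :
    a v (X * Y) k l = ∑ m, a v X k m * a v Y m l := by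
  have hw : Y.mulVec (v l) = ∑ m, (a v Y m l) • v m := expand_vec horth _
  rw [a, ← Matrix.mulVec_mulVec, hw]
  have h2 : X.mulVec (∑ m, (a v Y m l) • v m) = ∑ m, (a v Y m l) • X.mulVec (v m) := by
    rw [show X.mulVec = X.mulVecLin from rfl, map_sum]
    simp
  have hds : ∀ (u : Fin d → ℂ) (f : Fin d → Fin d → ℂ), u ⬝ᵥ (∑ m, f m) = ∑ m, u ⬝ᵥ f m := by
    intro u f
    simp only [dotProduct, Finset.sum_apply, Finset.mul_sum]
    exact Finset.sum_comm
  rw [h2, hds]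
  exact Finset.sum_congr rfl fun m _ => by
    rw [dotProduct_smul]; simp [a, mul_comm]

lemma herm_a {X : Matrix (Fin d) (Fin d) ℂ} (hX : Xᴴ = X) (k l : Fin d) :
    a v X l k = (starRingEnd ℂ) (a v X k l) := by
  have hX' : ∀ i j, X j i = (starRingEnd ℂ) (X i j) := by
    intro i j
    conv_lhs => rw [← hX]
    simp [conjTranspose_apply]
  simp only [a, dotProduct, Matrix.mulVec, dotProduct, Pi.star_apply, RCLike.star_def,
    map_sum, _root_.map_mul, Complex.conj_conj, Finset.mul_sum]
  rw [Finset.sum_comm]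
  exact Finset.sum_congr rfl fun i _ => Finset.sum_congr rfl fun j _ => by
    rw [hX' i j]; ring

section withhyp
variable (hρ : ρ = ∑ k, (p k : ℂ) • vecMulVec (v k) (star (v k)))
  (horth : ∀ k l, star (v k) ⬝ᵥ v l = (if k = l then 1 else 0))

include hρ horth in
lemma a_rho : ∀ k l, a v ρ k l = if k = l then (p k : ℂ) else 0 := by
  intro k l
  rw [hρ, a_sum]
  have h1 : ∀ m : Fin d, a v ((p m : ℂ) • vecMulVec (v m) (star (v m))) k l
      = (p m : ℂ) * ((if k = m then 1 else 0) * (if m = l then 1 else 0)) := by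
    intro m
    rw [a_smul]
    congr 1
    have hmm : (vecMulVec (v m) (star (v m))).mulVec (v l) = (star (v m) ⬝ᵥ v l) • v m := by
      funext i
      simp only [Matrix.mulVec, vecMulVec_apply, dotProduct, Pi.smul_apply, smul_eq_mul,
        Finset.sum_mul, Pi.star_apply, RCLike.star_def, Finset.mul_sum]
      exact Finset.sum_congr rfl fun x _ => by ring
    rw [a, hmm, dotProduct_smul, horth, horth]
    simp [mul_comm]
  have h2 : ∀ m : Fin d, (p m : ℂ) * ((if k = m then 1 else 0) * (if m = l then 1 else 0))
      = if k = m then (if m = l then (p m : ℂ) else 0) else 0 := by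
    intro m; split_ifs <;> simp
  rw [Finset.sum_congr rfl fun m _ => (h1 m).trans (h2 m), Finset.sum_ite_eq]
  simp

include hρ horth in
lemma a_rho_mul (X : Matrix (Fin d) (Fin d) ℂ) (k l : Fin d) :
    a v (ρ * X) k l = (p k : ℂ) * a v X k l := by
  rw [a_mul horth]
  rw [Finset.sum_congr rfl fun m _ => by rw [a_rho hρ horth]]
  simp

include hρ horth in
lemma a_mul_rho (X : Matrix (Fin d) (Fin d) ℂ) (k l : Fin d) :
    a v (X * ρ) k l = a v X k l * (p l : ℂ) := by
  rw [a_mul horth]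
  rw [Finset.sum_congr rfl fun m _ => by rw [a_rho hρ horth]]
  simp [mul_ite]

include horth in
lemma trace_eq (X : Matrix (Fin d) (Fin d) ℂ) : X.trace = ∑ k, a v X k k := by
  have hres := res horth
  have h1 : ∀ k, a v X k k = ∑ i, ∑ j, (starRingEnd ℂ) (v k i) * (X i j * v k j) := by
    intro k
    simp [a, dotProduct, Matrix.mulVec, Finset.mul_sum]
  have key : ∀ i j, ∑ k, (starRingEnd ℂ) (v k i) * (X i j * v k j)
      = X i j * (if i = j then 1 else 0) := by
    intro i j
    rw [show (∑ k, (starRingEnd ℂ) (v k i) * (X i j * v k j))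
        = X i j * ∑ k, (starRingEnd ℂ) (v k i) * v k j by
      rw [Finset.mul_sum]; exact Finset.sum_congr rfl fun x _ => by ring]
    rw [hres]
  calc X.trace = ∑ i, ∑ j, X i j * (if i = j then 1 else 0) := by
        simp [Matrix.trace, Matrix.diag, mul_ite, Finset.sum_ite_eq']
    _ = ∑ i, ∑ j, ∑ k, (starRingEnd ℂ) (v k i) * (X i j * v k j) :=
        Finset.sum_congr rfl fun i _ => Finset.sum_congr rfl fun j _ => (key i j).symm
    _ = ∑ i, ∑ k, ∑ j, (starRingEnd ℂ) (v k i) * (X i j * v k j) :=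
        Finset.sum_congr rfl fun i _ => Finset.sum_comm
    _ = ∑ k, ∑ i, ∑ j, (starRingEnd ℂ) (v k i) * (X i j * v k j) := Finset.sum_comm
    _ = ∑ k, a v X k k := Finset.sum_congr rfl fun k _ => (h1 k).symm

include hρ horth in
lemma wip_eq (X Y : Matrix (Fin d) (Fin d) ℂ) :
    wip ρ X Y = ∑ k, ∑ l, ((p k + p l)/2) * (a v X k l * a v Y l k).re := by
  have e1 : ∀ k, a v (ρ * (X * Y + Y * X)) k k
      = (p k : ℂ) * (∑ l, a v X k l * a v Y l k) + (p k : ℂ) * (∑ l, a v Y k l * a v X l k) := by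
    intro k
    rw [show ρ * (X * Y + Y * X) = ρ * (X * Y) + ρ * (Y * X) by rw [mul_add], a_add,
      a_rho_mul hρ horth, a_rho_mul hρ horth, a_mul horth, a_mul horth]
  have e2 : (∑ k, ∑ l, (p k : ℂ) * (a v Y k l * a v X l k))
      = ∑ k, ∑ l, (p l : ℂ) * (a v X k l * a v Y l k) := by
    rw [Finset.sum_comm]
    exact Finset.sum_congr rfl fun k _ => Finset.sum_congr rfl fun l _ => by ring
  have tr2 : (ρ * (X * Y + Y * X)).trace
      = ∑ k, ∑ l, (((p k + p l : ℝ)):ℂ) * (a v X k l * a v Y l k) := by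
    rw [trace_eq horth, Finset.sum_congr rfl fun k _ => e1 k, Finset.sum_add_distrib]
    rw [show (∑ k, (p k : ℂ) * (∑ l, a v Y k l * a v X l k))
        = ∑ k, ∑ l, (p k : ℂ) * (a v Y k l * a v X l k) by
      exact Finset.sum_congr rfl fun k _ => Finset.mul_sum _ _ _]
    rw [e2]
    rw [show (∑ k, (p k : ℂ) * (∑ l, a v X k l * a v Y l k))
        = ∑ k, ∑ l, (p k : ℂ) * (a v X k l * a v Y l k) by
      exact Finset.sum_congr rfl fun k _ => Finset.mul_sum _ _ _]
    rw [← Finset.sum_add_distrib]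
    refine Finset.sum_congr rfl fun k _ => ?_
    rw [← Finset.sum_add_distrib]
    refine Finset.sum_congr rfl fun l _ => ?_
    push_cast
    ring
  rw [wip, tr2, Finset.sum_div, Complex.re_sum]
  refine Finset.sum_congr rfl fun k _ => ?_
  rw [Finset.sum_div, Complex.re_sum]
  refine Finset.sum_congr rfl fun l _ => ?_
  rw [show (((p k + p l : ℝ)):ℂ) * (a v X k l * a v Y l k) / 2
      = ((((p k + p l)/2 : ℝ)):ℂ) * (a v X k l * a v Y l k) by push_cast; ring]
  simp [Complex.mul_re]

include hρ horth in
lemma wip_symm (X Y : Matrix (Fin d) (Fin d) ℂ) : wip ρ X Y = wip ρ Y X := by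
  rw [wip_eq hρ horth, wip_eq hρ horth, Finset.sum_comm]
  exact Finset.sum_congr rfl fun k _ => Finset.sum_congr rfl fun l _ => by
    rw [mul_comm (a v X l k), add_comm (p l)]

include hρ horth in
lemma wip_sub_left (X Y Z : Matrix (Fin d) (Fin d) ℂ) :
    wip ρ (X - Y) Z = wip ρ X Z - wip ρ Y Z := by
  rw [wip_eq hρ horth, wip_eq hρ horth, wip_eq hρ horth, ← Finset.sum_sub_distrib]
  refine Finset.sum_congr rfl fun k _ => ?_
  rw [← Finset.sum_sub_distrib]
  refine Finset.sum_congr rfl fun l _ => ?_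
  rw [a_sub, sub_mul, Complex.sub_re]
  ring

include hρ horth in
lemma wip_sub_right (X Y Z : Matrix (Fin d) (Fin d) ℂ) :
    wip ρ X (Y - Z) = wip ρ X Y - wip ρ X Z := by
  rw [wip_symm hρ horth, wip_sub_left hρ horth, wip_symm hρ horth X Y, wip_symm hρ horth X Z]

include hρ horth in
lemma wip_nonneg (hppos : ∀ k, 0 ≤ p k) {X : Matrix (Fin d) (Fin d) ℂ} (hX : Xᴴ = X) :
    0 ≤ wip ρ X X := by
  rw [wip_eq hρ horth]
  refine Finset.sum_nonneg fun k _ => Finset.sum_nonneg fun l _ => ?_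
  have hns : (a v X k l * a v X l k).re = Complex.normSq (a v X l k) := by
    rw [herm_a hX, mul_comm, Complex.mul_conj, Complex.ofReal_re]
  rw [hns]
  have h1 : (0:ℝ) ≤ (p k + p l)/2 := by have := hppos k; have := hppos l; linarith
  have h2 := Complex.normSq_nonneg (a v X l k)
  positivity

end withhyp

/-- The modified superoperator `X ↦ X - 2 R_ρ X`. -/
noncomputable def Aop (ρ : Matrix (Fin d) (Fin d) ℂ) (X : Matrix (Fin d) (Fin d) ℂ) :
    Matrix (Fin d) (Fin d) ℂ :=
  X - (2:ℝ) • Rop ρ X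

section entries
variable (hρ : ρ = ∑ k, (p k : ℂ) • vecMulVec (v k) (star (v k)))
  (horth : ∀ k l, star (v k) ⬝ᵥ v l = (if k = l then 1 else 0))

include hρ horth in
lemma a_Rop (X : Matrix (Fin d) (Fin d) ℂ) (k l : Fin d) :
    a v (Rop ρ X) k l = ((((p k + p l)/2 : ℝ)):ℂ) * a v X k l := by
  rw [Rop, a_smul, a_add, a_rho_mul hρ horth, a_mul_rho hρ horth]
  push_cast
  ring

include hρ horth in
lemma a_comm (H : Matrix (Fin d) (Fin d) ℂ) (k l : Fin d) :
    a v (comm ρ H) k l = Complex.I * (((p k : ℝ):ℂ) - ((p l : ℝ):ℂ)) * a v H k l := by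
  rw [comm, a_smul, a_sub, a_rho_mul hρ horth, a_mul_rho hρ horth]
  ring

include hρ horth in
lemma a_Aop_iter (X : Matrix (Fin d) (Fin d) ℂ) (k l : Fin d) :
    ∀ m : ℕ, a v ((Aop ρ)^[m] X) k l = (((1 - p k - p l)^m : ℝ):ℂ) * a v X k l := by
  intro m
  induction m with
  | zero => simp
  | succ m ih =>
      rw [Function.iterate_succ_apply', Aop, a_sub, a_smul_real, a_Rop hρ horth, ih]
      push_cast
      ring

end entries

section krylov
variable {H : Matrix (Fin d) (Fin d) ℂ}

lemma K_mono {m n : ℕ} (h : m ≤ n) (ρ H : Matrix (Fin d) (Fin d) ℂ) : K ρ H m ≤ K ρ H n :=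
  Submodule.span_mono (Set.image_mono fun x hx => lt_of_lt_of_le hx h)

lemma Rop_linear (ρ : Matrix (Fin d) (Fin d) ℂ) :
    ∃ f : Matrix (Fin d) (Fin d) ℂ →ₗ[ℝ] Matrix (Fin d) (Fin d) ℂ, ∀ X, f X = Rop ρ X := by
  refine ⟨{ toFun := Rop ρ, map_add' := ?_, map_smul' := ?_ }, fun X => rfl⟩
  · intro X Y; simp [Rop, mul_add, add_mul, smul_add]; abel
  · intro r X
    simp only [Rop, RingHom.id_apply]
    rw [Matrix.mul_smul, Matrix.smul_mul, ← smul_add, smul_comm]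

lemma Rop_mem {n : ℕ} (ρ H : Matrix (Fin d) (Fin d) ℂ) {X : Matrix (Fin d) (Fin d) ℂ}
    (hX : X ∈ K ρ H n) : Rop ρ X ∈ K ρ H (n+1) := by
  obtain ⟨f, hf⟩ := Rop_linear ρ
  rw [← hf]
  refine Submodule.span_induction ?_ ?_ ?_ ?_ hX
  · rintro x ⟨m, hm, rfl⟩
    have hit : Rop ρ ((Rop ρ)^[m] (comm ρ H)) = (Rop ρ)^[m+1] (comm ρ H) :=
      (Function.iterate_succ_apply' _ _ _).symm
    rw [hf, hit]
    exact Submodule.subset_span ⟨m+1, by simpa using Nat.succ_lt_succ hm, rfl⟩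
  · simp only [map_zero]; exact Submodule.zero_mem _
  · intro x y _ _ hx hy; rw [map_add]; exact Submodule.add_mem _ hx hy
  · intro r x _ hx; rw [f.map_smul]; exact Submodule.smul_mem _ _ hx

lemma Aop_iter_mem (ρ H : Matrix (Fin d) (Fin d) ℂ) :
    ∀ m : ℕ, (Aop ρ)^[m] (comm ρ H) ∈ K ρ H (m+1) := by
  intro m
  induction m with
  | zero =>
      exact Submodule.subset_span ⟨0, by simp, rfl⟩
  | succ m ih =>
      rw [Function.iterate_succ_apply', Aop]
      refine Submodule.sub_mem _ (K_mono (by omega) ρ H ih) ?_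
      exact Submodule.smul_mem _ _ (Rop_mem ρ H ih)

lemma rho_herm (hρ : ρ = ∑ k, (p k : ℂ) • vecMulVec (v k) (star (v k))) : ρᴴ = ρ := by
  rw [hρ]
  rw [Matrix.conjTranspose_sum]
  refine Finset.sum_congr rfl fun k _ => ?_
  rw [Matrix.conjTranspose_smul]
  congr 1
  · simp
  · ext i j
    simp [conjTranspose_apply, vecMulVec_apply, mul_comm]

lemma comm_herm (hρ' : ρᴴ = ρ) {H : Matrix (Fin d) (Fin d) ℂ} (hH : Hᴴ = H) :
    (comm ρ H)ᴴ = comm ρ H := by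
  rw [comm, Matrix.conjTranspose_smul, Matrix.conjTranspose_sub, Matrix.conjTranspose_mul,
    Matrix.conjTranspose_mul, hρ', hH]
  simp only [Complex.star_def, Complex.conj_I]
  module

lemma Rop_herm (hρ' : ρᴴ = ρ) {X : Matrix (Fin d) (Fin d) ℂ} (hX : Xᴴ = X) :
    (Rop ρ X)ᴴ = Rop ρ X := by
  rw [Rop, Matrix.conjTranspose_smul, Matrix.conjTranspose_add, Matrix.conjTranspose_mul,
    Matrix.conjTranspose_mul, hρ', hX]
  congr 1
  · simp
  · abel

lemma K_herm (hρ' : ρᴴ = ρ) {H : Matrix (Fin d) (Fin d) ℂ} (hH : Hᴴ = H) {n : ℕ}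
    {X : Matrix (Fin d) (Fin d) ℂ} (hX : X ∈ K ρ H n) : Xᴴ = X := by
  have iter_herm : ∀ m : ℕ, ((Rop ρ)^[m] (comm ρ H))ᴴ = (Rop ρ)^[m] (comm ρ H) := by
    intro m
    induction m with
    | zero => exact comm_herm hρ' hH
    | succ m ih =>
        rw [Function.iterate_succ_apply']
        exact Rop_herm hρ' ih
  refine Submodule.span_induction ?_ ?_ ?_ ?_ hX
  · rintro x ⟨m, _, rfl⟩
    exact iter_herm m
  · simp
  · intro x y _ _ hx hy; rw [Matrix.conjTranspose_add, hx, hy]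
  · intro r x _ hx; rw [Matrix.conjTranspose_smul, hx]; simp

end krylov

lemma geom_id (q : ℝ) (n : ℕ) :
    ∑ m ∈ Finset.range (2*n), q^m
      = 2 * (∑ m ∈ Finset.range n, q^m) - (1-q) * (∑ m ∈ Finset.range n, q^m)^2 := by
  have h1 : (∑ m ∈ Finset.range n, q^m) * (q - 1) = q^n - 1 := geom_sum_mul q n
  have h2 : ∑ m ∈ Finset.range (2*n), q^m
      = (∑ m ∈ Finset.range n, q^m) + q^n * (∑ m ∈ Finset.range n, q^m) := by
    rw [two_mul, Finset.sum_range_add]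
    simp [pow_add, Finset.mul_sum]
  rw [h2]
  linear_combination (-(∑ m ∈ Finset.range n, q^m)) * h1

lemma perterm (pk pl S S2 : ℝ) (c L' : ℂ)
    (hpk : 0 ≤ pk) (hpl : 0 ≤ pl)
    (hS2 : S2 = 2*S - (pk+pl)*S^2)
    (hL' : ((((pk + pl)/2 : ℝ)):ℂ) * L' = Complex.I * (((pk:ℝ):ℂ) - ((pl:ℝ):ℂ)) * c)
    (hL0 : pk = 0 → pl = 0 → L' = 0) :
    2 * (((pk + pl)/2) * (L' * ((((2*S : ℝ)):ℂ) * (Complex.I * (((pl:ℝ):ℂ) - ((pk:ℝ):ℂ)) * (starRingEnd ℂ) c))).re)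
    - ((pk + pl)/2) * (((((2*S : ℝ)):ℂ) * (Complex.I * (((pk:ℝ):ℂ) - ((pl:ℝ):ℂ)) * c))
        * ((((2*S : ℝ)):ℂ) * (Complex.I * (((pl:ℝ):ℂ) - ((pk:ℝ):ℂ)) * (starRingEnd ℂ) c))).re
    = 2 * ((pk - pl)^2 * S2 * Complex.normSq c) := by
  rcases eq_or_lt_of_le (by positivity : (0:ℝ) ≤ pk + pl) with h0 | hpos
  · have hk : pk = 0 := by linarith
    have hl : pl = 0 := by linarith
    simp [hL0 hk hl, hk, hl]
  · set W : ℂ := (((2*S : ℝ)):ℂ) * (Complex.I * (((pl:ℝ):ℂ) - ((pk:ℝ):ℂ)) * (starRingEnd ℂ) c) with hW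
    have e1 : ((pk + pl)/2) * (L' * W).re
        = ((Complex.I * (((pk:ℝ):ℂ) - ((pl:ℝ):ℂ)) * c) * W).re := by
      rw [show ((pk + pl)/2) * (L' * W).re = (((((pk + pl)/2 : ℝ)):ℂ) * (L' * W)).re by
        simp [Complex.mul_re]]
      rw [← mul_assoc, hL']
    rw [e1, hS2, hW]
    simp only [Complex.mul_re, Complex.mul_im, Complex.I_re, Complex.I_im, Complex.ofReal_re,
      Complex.ofReal_im, Complex.conj_re, Complex.conj_im, Complex.sub_re, Complex.sub_im,
      Complex.normSq_apply]
    ring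

end Aux

/-- The n-th Krylov bound dominates the (2n−1)-th Taylor bound:
B_{2n−1}^{Tay} ≤ B_n^{Kry} ≤ F_Q. -/
theorem stmt18 {d : ℕ} (ρ : Matrix (Fin d) (Fin d) ℂ) (p : Fin d → ℝ) (v : Fin d → (Fin d → ℂ))
    (hρ : ρ = ∑ k, (p k : ℂ) • vecMulVec (v k) (star (v k)))
    (horth : ∀ k l, star (v k) ⬝ᵥ v l = (if k = l then 1 else 0))
    (hppos : ∀ k, 0 ≤ p k) (hptr : ∑ k, p k = 1) (H : Matrix (Fin d) (Fin d) ℂ) (hH : H.IsHermitian)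
    (L : Matrix (Fin d) (Fin d) ℂ) (hLX : memX p v L) (hL : Rop ρ L = comm ρ H)
    (hFQ : 0 < FQ p v H) :
    ∀ n : ℕ, 1 ≤ n → ∀ P, IsProj ρ H n L P →
      BTaySum p v H (2 * n - 1) ≤ wip ρ P P ∧ wip ρ P P ≤ wip ρ L L := by
  intro n hn P hP
  have hρ' : ρᴴ = ρ := rho_herm hρ
  have hHh : Hᴴ = H := hH
  have hLh : Lᴴ = L := hLX.1
  set Z : Matrix (Fin d) (Fin d) ℂ :=
    (2:ℝ) • ∑ m ∈ Finset.range n, (Aop ρ)^[m] (comm ρ H) with hZdef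
  have hZmem : Z ∈ K ρ H n := by
    refine Submodule.smul_mem _ _ (Submodule.sum_mem _ fun m hm => ?_)
    exact K_mono (by simp at hm; omega) ρ H (Aop_iter_mem ρ H m)
  have hZherm : Zᴴ = Z := K_herm hρ' hHh hZmem
  have hPherm : Pᴴ = P := K_herm hρ' hHh hP.1
  have haZ : ∀ k l, a v Z k l
      = (((2 * ∑ m ∈ Finset.range n, (1 - p k - p l)^m : ℝ)):ℂ)
        * (Complex.I * (((p k : ℝ):ℂ) - ((p l : ℝ):ℂ)) * a v H k l) := by
    intro k l
    rw [hZdef, a_smul_real, a_sum]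
    rw [Finset.sum_congr rfl fun m _ => by
      rw [a_Aop_iter hρ horth, a_comm hρ horth]]
    rw [show (∑ m ∈ Finset.range n, (((1 - p k - p l)^m : ℝ):ℂ)
          * (Complex.I * (((p k : ℝ):ℂ) - ((p l : ℝ):ℂ)) * a v H k l))
        = (∑ m ∈ Finset.range n, (((1 - p k - p l)^m : ℝ):ℂ))
          * (Complex.I * (((p k : ℝ):ℂ) - ((p l : ℝ):ℂ)) * a v H k l) from
      (Finset.sum_mul _ _ _).symm]
    push_cast
    ring
  have hidx : 2*n-1+1 = 2*n := by omega
  have per : ∀ k l : Fin d,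
      2 * (((p k + p l)/2) * (a v L k l * a v Z l k).re)
        - ((p k + p l)/2) * (a v Z k l * a v Z l k).re
      = 2 * ((p k - p l)^2 * (∑ m ∈ Finset.range (2*n), (1 - p k - p l)^m)
          * Complex.normSq (a v H k l)) := by
    intro k l
    have hsw : (∑ m ∈ Finset.range n, ((1:ℝ) - p l - p k)^m)
        = ∑ m ∈ Finset.range n, (1 - p k - p l)^m :=
      Finset.sum_congr rfl fun m _ => by ring_nf
    have hZlk : a v Z l k
        = (((2 * ∑ m ∈ Finset.range n, (1 - p k - p l)^m : ℝ)):ℂ)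
          * (Complex.I * (((p l : ℝ):ℂ) - ((p k : ℝ):ℂ)) * (starRingEnd ℂ) (a v H k l)) := by
      rw [haZ l k, hsw, herm_a hHh k l]
    have hL' : ((((p k + p l)/2 : ℝ)):ℂ) * a v L k l
        = Complex.I * (((p k : ℝ):ℂ) - ((p l : ℝ):ℂ)) * a v H k l := by
      have h := congrArg (fun M => a v M k l) hL
      rw [a_Rop hρ horth, a_comm hρ horth] at h
      exact h
    have hS2 : (∑ m ∈ Finset.range (2*n), (1 - p k - p l)^m)
        = 2 * (∑ m ∈ Finset.range n, (1 - p k - p l)^m)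
          - (p k + p l) * (∑ m ∈ Finset.range n, (1 - p k - p l)^m)^2 := by
      rw [geom_id (1 - p k - p l) n]
      ring
    rw [haZ k l, hZlk]
    exact perterm (p k) (p l) _ _ (a v H k l) (a v L k l) (hppos k) (hppos l) hS2 hL'
      (fun hk hl => hLX.2 k l hk hl)
  have keyB : BTaySum p v H (2*n-1)
      = ∑ k, ∑ l, 2 * ((p k - p l)^2 * (∑ m ∈ Finset.range (2*n), (1 - p k - p l)^m)
          * Complex.normSq (a v H k l)) := by
    simp only [BTaySum, hidx]
    rw [Finset.mul_sum]
    exact Finset.sum_congr rfl fun k _ => Finset.mul_sum _ _ _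
  have key : 2 * wip ρ L Z - wip ρ Z Z = BTaySum p v H (2*n-1) := by
    rw [wip_eq hρ horth L Z, wip_eq hρ horth Z Z, keyB, Finset.mul_sum,
      ← Finset.sum_sub_distrib]
    refine Finset.sum_congr rfl fun k _ => ?_
    rw [Finset.mul_sum, ← Finset.sum_sub_distrib]
    exact Finset.sum_congr rfl fun l _ => per k l
  have eLZ : wip ρ L Z = wip ρ P Z := by
    have h := hP.2 Z hZmem
    rw [wip_sub_left hρ horth] at h
    linarith
  have eLP : wip ρ L P = wip ρ P P := by
    have h := hP.2 P hP.1
    rw [wip_sub_left hρ horth] at h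
    linarith
  have pos1 : 0 ≤ wip ρ (P - Z) (P - Z) :=
    wip_nonneg hρ horth hppos (by rw [Matrix.conjTranspose_sub, hPherm, hZherm])
  have pos2 : 0 ≤ wip ρ (L - P) (L - P) :=
    wip_nonneg hρ horth hppos (by rw [Matrix.conjTranspose_sub, hLh, hPherm])
  have exp1 : wip ρ (P - Z) (P - Z) = wip ρ P P - 2 * wip ρ P Z + wip ρ Z Z := by
    rw [wip_sub_left hρ horth, wip_sub_right hρ horth, wip_sub_right hρ horth,
      wip_symm hρ horth Z P]
    ring
  have exp2 : wip ρ (L - P) (L - P) = wip ρ L L - 2 * wip ρ L P + wip ρ P P := by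
    rw [wip_sub_left hρ horth, wip_sub_right hρ horth, wip_sub_right hρ horth,
      wip_symm hρ horth P L]
    ring
  constructor
  · linarith
  · linarith


end KST
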